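/- Let G be a finite abelian group of order n whose exponent is at least 3 (i.e., G is not an elementary abelian 2-group), and let L = {x ∈ G : 2x = 0}. Then every subset A ⊆ G with |A| ≥ (n + |L|)/2 + 1 satisfies 2∧A = G, where 2∧A = {a + b : a, b ∈ A, a ≠ b} is the 2-fold restricted sumset. -/

import Mathlib

/-- The `h`-fold restricted sumset of a finite set `A`: all sums of `h`
pairwise distinct elements of `A`. -/
def restSumset {G : Type*} [AddCommMonoid G] [DecidableEq G] (h : ℕ) (A : Finset G) :
    Finset G :=
  (A.powersetCard h).image fun s => s.sum id

theorem stmt4 {G : Type*} [AddCommGroup G] [Fintype G] [DecidableEq G]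
    (hG : ¬ ∀ x : G, x + x = 0)
    (A : Finset G)
    (hA : (Fintype.card G + (Finset.univ.filter fun x : G => x + x = 0).card) / 2 + 1
        ≤ A.card) :
    restSumset 2 A = Finset.univ := by
  classical
  ext c
  simp only [Finset.mem_univ, iff_true]
  set L := (Finset.univ.filter fun x : G => x + x = 0) with hL
  set B := A.image (fun x => c - x) with hB
  have hBcard : B.card = A.card :=
    Finset.card_image_of_injective _ (fun a b h => by
      have := sub_right_injective h; simpa using this)
  have hIU : (A ∩ B).card + (A ∪ B).card = A.card + B.card :=
    Finset.card_inter_add_card_union A B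
  have hU : (A ∪ B).card ≤ Fintype.card G := Finset.card_le_univ _
  have hbad : ((A ∩ B).filter (fun x => x + x = c)).card ≤ L.card := by
    calc ((A ∩ B).filter (fun x => x + x = c)).card
        ≤ (Finset.univ.filter fun x : G => x + x = c).card := by
          apply Finset.card_le_card
          intro x hx
          simp only [Finset.mem_filter, Finset.mem_univ, true_and] at hx ⊢
          exact hx.2
      _ ≤ L.card := by
          rcases (Finset.univ.filter fun x : G => x + x = c).eq_empty_or_nonempty with h | ⟨x₀, hx₀⟩
          · simp [h]
          · have hx₀' : x₀ + x₀ = c := (Finset.mem_filter.mp hx₀).2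
            apply Finset.card_le_card_of_injOn (fun x => x - x₀)
            · intro x hx
              have hx' : x + x = c := (Finset.mem_filter.mp hx).2
              simp only [hL, Finset.mem_coe, Finset.mem_filter, Finset.mem_univ, true_and]
              have : (x - x₀) + (x - x₀) = (x + x) - (x₀ + x₀) := by abel
              rw [this, hx', hx₀', sub_self]
            · intro a _ b _ h
              exact sub_left_injective h
  have hsplit : ((A ∩ B).filter (fun x => x + x = c)).card
      + ((A ∩ B).filter (fun x => ¬ (x + x = c))).card = (A ∩ B).card :=
    Finset.card_filter_add_card_filter_not _
  have hT : ((A ∩ B).filter (fun x => ¬ (x + x = c))).Nonempty := by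
    rw [← Finset.card_pos]
    omega
  obtain ⟨x, hx⟩ := hT
  simp only [Finset.mem_filter, Finset.mem_inter] at hx
  obtain ⟨⟨hxA, hxB⟩, hxc⟩ := hx
  have hcxA : c - x ∈ A := by
    obtain ⟨a, haA, ha⟩ := Finset.mem_image.mp hxB
    have : c - x = a := by rw [← ha]; abel
    rwa [this]
  have hne : x ≠ c - x := by
    intro h
    apply hxc
    calc x + x = x + (c - x) := by rw [← h]
      _ = c := by abel
  refine Finset.mem_image.mpr ⟨{x, c - x}, ?_, ?_⟩
  · rw [Finset.mem_powersetCard]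
    constructor
    · intro y hy
      rcases Finset.mem_insert.mp hy with h | h
      · rwa [h]
      · rw [Finset.mem_singleton.mp h]; exact hcxA
    · exact Finset.card_pair hne
  · rw [Finset.sum_pair hne]
    simp
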